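/- Let Φ*(η₁,η₂) = η₁ log η₁ + η₂ log η₂ − (1 + η₁ + η₂) log(1 + η₁ + η₂) on Ω* = (0,∞)², let g = Hess Φ*, define the Ricci matrix R by R_{ij} = −∂²(log det g)/∂η_i∂η_j, and set A = R·g⁻¹. Then at every point of Ω*, with S = 1 + η₁ + η₂: det A = ( 1 + 2(η₁ + η₁² + η₂ + η₂² + η₁η₂) ) / ( η₁ η₂ S ) and tr A = −3 − 1/η₁ − 1/η₂ + 1/S. -/

import Mathlib

open Real Matrix

/-- Partial derivative of `f : ℝⁿ → ℝ` in the `i`-th coordinate direction. -/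
noncomputable def pd {n : ℕ} (i : Fin n) (f : (Fin n → ℝ) → ℝ) : (Fin n → ℝ) → ℝ :=
  fun x => fderiv ℝ f x (Pi.single i 1)

/-- Hessian matrix of second partial derivatives of `f : ℝⁿ → ℝ`. -/
noncomputable def hessian {n : ℕ} (f : (Fin n → ℝ) → ℝ) (x : Fin n → ℝ) :
    Matrix (Fin n) (Fin n) ℝ :=
  Matrix.of fun i j => pd i (pd j f) x

/-- The Legendre dual of the negative trinomial log-partition function. -/
noncomputable def ΦNegTriStar (η : Fin 2 → ℝ) : ℝ :=
  η 0 * Real.log (η 0) + η 1 * Real.log (η 1) -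
    (1 + η 0 + η 1) * Real.log (1 + η 0 + η 1)

/-- The Ricci matrix `R_{ij} = -∂²(log det Hess Φ*)/∂η_i∂η_j` of `𝕎_NegTri`. -/
noncomputable def ricciNegTri (η : Fin 2 → ℝ) : Matrix (Fin 2) (Fin 2) ℝ :=
  -(hessian (fun y => Real.log ((hessian ΦNegTriStar y).det)) η)

noncomputable def pr (i : Fin 2) : ((Fin 2) → ℝ) →L[ℝ] ℝ := ContinuousLinearMap.proj i

lemma hasFDerivAt_S (x : Fin 2 → ℝ) :
    HasFDerivAt (fun y : Fin 2 → ℝ => 1 + y 0 + y 1) (pr 0 + pr 1) x := by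
  have h0 : HasFDerivAt (fun y : Fin 2 → ℝ => y 0) (pr 0) x := hasFDerivAt_apply (𝕜 := ℝ) 0 x
  have h1 : HasFDerivAt (fun y : Fin 2 → ℝ => y 1) (pr 1) x := hasFDerivAt_apply (𝕜 := ℝ) 1 x
  have := ((hasFDerivAt_const (1:ℝ) x).add h0).add h1
  simp only [zero_add] at this
  exact this

lemma hasFDerivAt_Φ (x : Fin 2 → ℝ) (h0 : x 0 ≠ 0) (h1 : x 1 ≠ 0)
    (hS : (1:ℝ) + x 0 + x 1 ≠ 0) :
    HasFDerivAt ΦNegTriStar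
      ((Real.log (x 0) + 1) • pr 0 + (Real.log (x 1) + 1) • pr 1
        - (Real.log (1 + x 0 + x 1) + 1) • (pr 0 + pr 1)) x := by
  have A := (Real.hasDerivAt_mul_log h0).comp_hasFDerivAt x (hasFDerivAt_apply (𝕜 := ℝ) 0 x)
  have B := (Real.hasDerivAt_mul_log h1).comp_hasFDerivAt x (hasFDerivAt_apply (𝕜 := ℝ) 1 x)
  have C := (Real.hasDerivAt_mul_log hS).comp_hasFDerivAt x (hasFDerivAt_S x)
  exact ((A.add B).sub C : _)

lemma pd_Φ (j : Fin 2) (x : Fin 2 → ℝ) (h0 : 0 < x 0) (h1 : 0 < x 1) :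
    pd j ΦNegTriStar x = Real.log (x j) - Real.log (1 + x 0 + x 1) := by
  have hS : (0:ℝ) < 1 + x 0 + x 1 := by linarith
  have hF := hasFDerivAt_Φ x h0.ne' h1.ne' hS.ne'
  simp only [pd, hF.fderiv]
  fin_cases j <;>
    simp [pr, Pi.single_apply]

noncomputable def U : Set (Fin 2 → ℝ) := {y | 0 < y 0 ∧ 0 < y 1}

lemma isOpen_U : IsOpen U :=
  ((isOpen_lt continuous_const (continuous_apply 0)).inter
    (isOpen_lt continuous_const (continuous_apply 1)))

lemma hasFDerivAt_F2 (j : Fin 2) (x : Fin 2 → ℝ) (hj : x j ≠ 0)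
    (hS : (1:ℝ) + x 0 + x 1 ≠ 0) :
    HasFDerivAt (fun y : Fin 2 → ℝ => Real.log (y j) - Real.log (1 + y 0 + y 1))
      ((x j)⁻¹ • pr j - (1 + x 0 + x 1)⁻¹ • (pr 0 + pr 1)) x := by
  have A := (Real.hasDerivAt_log hj).comp_hasFDerivAt x (hasFDerivAt_apply (𝕜 := ℝ) j x)
  have B := (Real.hasDerivAt_log hS).comp_hasFDerivAt x (hasFDerivAt_S x)
  exact (A.sub B : _)

lemma hess_entry (i j : Fin 2) (x : Fin 2 → ℝ) (h0 : 0 < x 0) (h1 : 0 < x 1) :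
    hessian ΦNegTriStar x i j =
      (if i = j then (x j)⁻¹ else 0) - (1 + x 0 + x 1)⁻¹ := by
  have hS : (0:ℝ) < 1 + x 0 + x 1 := by linarith
  have hev : pd j ΦNegTriStar =ᶠ[nhds x]
      (fun y => Real.log (y j) - Real.log (1 + y 0 + y 1)) := by
    filter_upwards [isOpen_U.mem_nhds ⟨h0, h1⟩] with y hy
    exact pd_Φ j y hy.1 hy.2
  have hF := hasFDerivAt_F2 j x (by fin_cases j <;> [exact h0.ne'; exact h1.ne']) hS.ne'
  show pd i (pd j ΦNegTriStar) x = _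
  simp only [pd, hev.fderiv_eq, hF.fderiv]
  fin_cases i <;> fin_cases j <;> simp [pr, Pi.single_apply]

lemma hess_Φ (x : Fin 2 → ℝ) (h0 : 0 < x 0) (h1 : 0 < x 1) :
    hessian ΦNegTriStar x =
      !![(x 0)⁻¹ - (1 + x 0 + x 1)⁻¹, -(1 + x 0 + x 1)⁻¹;
         -(1 + x 0 + x 1)⁻¹, (x 1)⁻¹ - (1 + x 0 + x 1)⁻¹] := by
  ext i j
  rw [hess_entry i j x h0 h1]
  fin_cases i <;> fin_cases j <;> simp

lemma logdet_eq (x : Fin 2 → ℝ) (h0 : 0 < x 0) (h1 : 0 < x 1) :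
    Real.log ((hessian ΦNegTriStar x).det) =
      -(Real.log (x 0) + Real.log (x 1) + Real.log (1 + x 0 + x 1)) := by
  have hS : (0:ℝ) < 1 + x 0 + x 1 := by linarith
  have hdet : (hessian ΦNegTriStar x).det = (x 0 * x 1 * (1 + x 0 + x 1))⁻¹ := by
    rw [hess_Φ x h0 h1, Matrix.det_fin_two_of]
    field_simp
    ring
  rw [hdet, Real.log_inv, Real.log_mul (by positivity) hS.ne',
    Real.log_mul h0.ne' h1.ne']

lemma hasFDerivAt_G3 (x : Fin 2 → ℝ) (h0 : x 0 ≠ 0) (h1 : x 1 ≠ 0)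
    (hS : (1:ℝ) + x 0 + x 1 ≠ 0) :
    HasFDerivAt (fun y : Fin 2 → ℝ =>
        -(Real.log (y 0) + Real.log (y 1) + Real.log (1 + y 0 + y 1)))
      (-((x 0)⁻¹ • pr 0 + (x 1)⁻¹ • pr 1 + (1 + x 0 + x 1)⁻¹ • (pr 0 + pr 1))) x := by
  have A := (Real.hasDerivAt_log h0).comp_hasFDerivAt x (hasFDerivAt_apply (𝕜 := ℝ) 0 x)
  have B := (Real.hasDerivAt_log h1).comp_hasFDerivAt x (hasFDerivAt_apply (𝕜 := ℝ) 1 x)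
  have C := (Real.hasDerivAt_log hS).comp_hasFDerivAt x (hasFDerivAt_S x)
  exact (((A.add B).add C).neg : _)

lemma pd_L (j : Fin 2) (x : Fin 2 → ℝ) (h0 : 0 < x 0) (h1 : 0 < x 1) :
    pd j (fun y => Real.log ((hessian ΦNegTriStar y).det)) x =
      -((x j)⁻¹ + (1 + x 0 + x 1)⁻¹) := by
  have hS : (0:ℝ) < 1 + x 0 + x 1 := by linarith
  have hev : (fun y => Real.log ((hessian ΦNegTriStar y).det)) =ᶠ[nhds x]
      (fun y => -(Real.log (y 0) + Real.log (y 1) + Real.log (1 + y 0 + y 1))) := by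
    filter_upwards [isOpen_U.mem_nhds ⟨h0, h1⟩] with y hy
    exact logdet_eq y hy.1 hy.2
  have hF := hasFDerivAt_G3 x h0.ne' h1.ne' hS.ne'
  simp only [pd, hev.fderiv_eq, hF.fderiv]
  fin_cases j <;> simp [pr, Pi.single_apply]

lemma hasFDerivAt_G4 (j : Fin 2) (x : Fin 2 → ℝ) (hj : x j ≠ 0)
    (hS : (1:ℝ) + x 0 + x 1 ≠ 0) :
    HasFDerivAt (fun y : Fin 2 → ℝ => -((y j)⁻¹ + (1 + y 0 + y 1)⁻¹))
      (-((-((x j) ^ 2)⁻¹) • pr j + (-((1 + x 0 + x 1) ^ 2)⁻¹) • (pr 0 + pr 1))) x := by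
  have A := (hasDerivAt_inv hj).comp_hasFDerivAt x (hasFDerivAt_apply (𝕜 := ℝ) j x)
  have B := (hasDerivAt_inv hS).comp_hasFDerivAt x (hasFDerivAt_S x)
  exact ((A.add B).neg : _)

lemma ricci_entry (i j : Fin 2) (x : Fin 2 → ℝ) (h0 : 0 < x 0) (h1 : 0 < x 1) :
    ricciNegTri x i j =
      -((if i = j then ((x j) ^ 2)⁻¹ else 0) + ((1 + x 0 + x 1) ^ 2)⁻¹) := by
  have hS : (0:ℝ) < 1 + x 0 + x 1 := by linarith
  have hev : pd j (fun y => Real.log ((hessian ΦNegTriStar y).det)) =ᶠ[nhds x]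
      (fun y => -((y j)⁻¹ + (1 + y 0 + y 1)⁻¹)) := by
    filter_upwards [isOpen_U.mem_nhds ⟨h0, h1⟩] with y hy
    exact pd_L j y hy.1 hy.2
  have hF := hasFDerivAt_G4 j x (by fin_cases j <;> [exact h0.ne'; exact h1.ne']) hS.ne'
  show -(hessian (fun y => Real.log ((hessian ΦNegTriStar y).det)) x) i j = _
  show -(pd i (pd j (fun y => Real.log ((hessian ΦNegTriStar y).det))) x) = _
  simp only [pd, hev.fderiv_eq, hF.fderiv]
  fin_cases i <;> fin_cases j <;> simp [pr, Pi.single_apply] <;> ring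

lemma ricci_mat (x : Fin 2 → ℝ) (h0 : 0 < x 0) (h1 : 0 < x 1) :
    ricciNegTri x =
      !![-(((x 0) ^ 2)⁻¹ + ((1 + x 0 + x 1) ^ 2)⁻¹), -((1 + x 0 + x 1) ^ 2)⁻¹;
         -((1 + x 0 + x 1) ^ 2)⁻¹, -(((x 1) ^ 2)⁻¹ + ((1 + x 0 + x 1) ^ 2)⁻¹)] := by
  ext i j
  rw [ricci_entry i j x h0 h1]
  fin_cases i <;> fin_cases j <;> simp

lemma hess_inv (x : Fin 2 → ℝ) (h0 : 0 < x 0) (h1 : 0 < x 1) :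
    (hessian ΦNegTriStar x)⁻¹ =
      !![x 0 * (1 + x 0), x 0 * x 1; x 0 * x 1, x 1 * (1 + x 1)] := by
  have hS : (0:ℝ) < 1 + x 0 + x 1 := by linarith
  apply Matrix.inv_eq_right_inv
  rw [hess_Φ x h0 h1]
  ext i j
  fin_cases i <;> fin_cases j <;>
    · simp [Matrix.mul_apply, Fin.sum_univ_two, Matrix.one_apply]
      field_simp
      ring


/-- Determinant and trace of the Ricci endomorphism `A = R·g⁻¹` of `𝕎_NegTri`. -/
theorem ricci_endomorphism_negTri (η : Fin 2 → ℝ) (h1 : 0 < η 0) (h2 : 0 < η 1) :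
    (ricciNegTri η * (hessian ΦNegTriStar η)⁻¹).det =
      (1 + 2 * (η 0 + (η 0) ^ 2 + η 1 + (η 1) ^ 2 + η 0 * η 1)) /
        (η 0 * η 1 * (1 + η 0 + η 1)) ∧
    Matrix.trace (ricciNegTri η * (hessian ΦNegTriStar η)⁻¹) =
      -3 - 1 / η 0 - 1 / η 1 + 1 / (1 + η 0 + η 1) := by
  have hS : (0:ℝ) < 1 + η 0 + η 1 := by linarith
  rw [ricci_mat η h1 h2, hess_inv η h1 h2]
  rw [Matrix.mul_fin_two]
  constructor
  · rw [Matrix.det_fin_two_of]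
    field_simp
    ring
  · rw [Matrix.trace_fin_two_of]
    field_simp
    ring
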